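/- Let X be a Banach space with a shrinking finite-dimensional decomposition (X_n), and Y a finite-codimensional closed subspace of X. Then for every ε > 0 there exists a tail subspace Z = closed span of ⋃_{n>n₀} X_n such that the unit ball of Z is contained in B_Y + ε B_X. -/

import Mathlib

open Filter

/-- Let `X` be a Banach space with a shrinking finite-dimensional
decomposition, encoded by its partial sum projections `P n` (finite rank, commuting as
`P n ∘ P m = P min`, converging pointwise to the identity, with adjoints converging in norm
on the dual), and let `Y` be a closed finite-codimensional subspace of `X`.  Then for every
`ε > 0` there is a tail subspace `Z = ker (P n₀)` (the closed span of the `X n`, `n > n₀`)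
whose unit ball is contained in `B_Y + ε B_X`. -/
theorem statement15 {X : Type*} [NormedAddCommGroup X] [NormedSpace ℝ X] [CompleteSpace X]
    (P : ℕ → (X →L[ℝ] X))
    (hrank : ∀ n, FiniteDimensional ℝ (LinearMap.range (P n : X →ₗ[ℝ] X)))
    (hcomm : ∀ m n : ℕ, m ≤ n → (P m).comp (P n) = P m ∧ (P n).comp (P m) = P m)
    (hconv : ∀ x : X, Tendsto (fun n => P n x) atTop (nhds x))
    (hshrinking : ∀ f : X →L[ℝ] ℝ,
      Tendsto (fun n => ‖f - f.comp (P n)‖) atTop (nhds 0))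
    (Y : Submodule ℝ X) (hYclosed : IsClosed (Y : Set X))
    (hYcodim : FiniteDimensional ℝ (X ⧸ Y))
    (ε : ℝ) (hε : 0 < ε) :
    ∃ n₀ : ℕ, ∀ z ∈ LinearMap.ker (P n₀ : X →ₗ[ℝ] X), ‖z‖ ≤ 1 →
      ∃ y ∈ Y, ‖y‖ ≤ 1 ∧ ‖z - y‖ ≤ ε := by
  classical
  -- the quotient map as a continuous linear map
  set q : X →L[ℝ] X ⧸ Y :=
    LinearMap.mkContinuous Y.mkQ 1 (fun x => by
      simpa using Submodule.Quotient.norm_mk_le Y x) with hq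
  -- a basis of the finite-dimensional quotient
  let ι := Module.Free.ChooseBasisIndex ℝ (X ⧸ Y)
  let b : Module.Basis ι ℝ (X ⧸ Y) := Module.Free.chooseBasis ℝ (X ⧸ Y)
  have : Fintype ι := inferInstance
  -- the coordinate functionals composed with `q`
  let f : ι → (X →L[ℝ] ℝ) := fun i =>
    (LinearMap.toContinuousLinearMap (b.coord i)).comp q
  -- constants
  set η : ℝ := ε / 4 with hη
  have hη0 : 0 < η := by positivity
  set C : ℝ := 1 + ∑ i : ι, ‖b i‖ with hC
  have hC0 : 0 < C := by
    have : (0:ℝ) ≤ ∑ i : ι, ‖b i‖ := Finset.sum_nonneg fun i _ => norm_nonneg _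
    linarith
  set δ : ℝ := η / C with hδdef
  have hδ0 : 0 < δ := by positivity
  -- choose `n₀` such that all the finitely many functionals are `δ`-approximated
  have key : ∀ i : ι, ∀ᶠ n in atTop, ‖f i - (f i).comp (P n)‖ < δ := by
    intro i
    have := (hshrinking (f i)).eventually (eventually_lt_nhds hδ0)
    simpa using this
  have key' : ∀ᶠ n in atTop, ∀ i : ι, ‖f i - (f i).comp (P n)‖ < δ :=
    eventually_all.2 key
  obtain ⟨n₀, hn₀⟩ := key'.exists
  refine ⟨n₀, fun z hz hz1 => ?_⟩
  have hPz : P n₀ z = 0 := hz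
  -- each coordinate of `q z` is small
  have hcoord : ∀ i : ι, |f i z| ≤ δ := by
    intro i
    have : f i z = (f i - (f i).comp (P n₀)) z := by
      simp [hPz]
    rw [this]
    calc |(f i - (f i).comp (P n₀)) z| ≤ ‖f i - (f i).comp (P n₀)‖ * ‖z‖ :=
          (f i - (f i).comp (P n₀)).le_opNorm z
      _ ≤ δ * 1 := by
          apply mul_le_mul (le_of_lt (hn₀ i)) hz1 (norm_nonneg _)
            (le_of_lt hδ0)
      _ = δ := mul_one δ
  -- hence the quotient norm of `z` is small
  have hqz : ‖q z‖ ≤ η := by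
    have hrepr : q z = ∑ i : ι, (b.coord i (q z)) • b i := by
      simpa using (b.sum_repr (q z)).symm
    calc ‖q z‖ = ‖∑ i : ι, (b.coord i (q z)) • b i‖ := by rw [← hrepr]
      _ ≤ ∑ i : ι, ‖(b.coord i (q z)) • b i‖ := norm_sum_le _ _
      _ ≤ ∑ i : ι, δ * ‖b i‖ := by
          apply Finset.sum_le_sum
          intro i _
          rw [norm_smul]
          have : ‖b.coord i (q z)‖ = |f i z| := by
            simp [f, Real.norm_eq_abs]
          rw [this]
          exact mul_le_mul_of_nonneg_right (hcoord i) (norm_nonneg _)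
      _ = δ * ∑ i : ι, ‖b i‖ := by rw [Finset.mul_sum]
      _ ≤ δ * C := by
          apply mul_le_mul_of_nonneg_left _ (le_of_lt hδ0)
          rw [hC]; linarith
      _ = η := by
          rw [hδdef]; field_simp
  -- lift: find `m` with `mk m = q z` and `‖m‖ < 2η`
  have hqz' : ‖q z‖ < 2 * η := lt_of_le_of_lt hqz (by linarith)
  have hqzval : (q z : X ⧸ Y) = Submodule.Quotient.mk z := rfl
  obtain ⟨m, hm, hmnorm⟩ := Submodule.Quotient.norm_mk_lt (q z) hη0
  have hmnorm' : ‖m‖ < 2 * η := lt_of_lt_of_le hmnorm (by linarith)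
  -- `z - m ∈ Y`
  have hzm : z - m ∈ Y := by
    have : Submodule.Quotient.mk m = (Submodule.Quotient.mk z : X ⧸ Y) := by
      rw [hm, hqzval]
    have h2 := (Submodule.Quotient.eq Y).mp this.symm
    exact h2
  set y₀ : X := z - m with hy₀
  have hy₀norm : ‖y₀‖ ≤ 1 + 2 * η := by
    calc ‖y₀‖ ≤ ‖z‖ + ‖m‖ := norm_sub_le z m
      _ ≤ 1 + 2 * η := by linarith
  -- rescale
  set c : ℝ := 1 / (1 + 2 * η) with hc
  have h2η : (0:ℝ) < 1 + 2 * η := by linarith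
  have hc0 : 0 < c := by positivity
  have hc1 : c ≤ 1 := by
    rw [hc, div_le_one h2η]; linarith
  refine ⟨c • y₀, Y.smul_mem c hzm, ?_, ?_⟩
  · rw [norm_smul, Real.norm_eq_abs, abs_of_pos hc0, hc]
    rw [div_mul_eq_mul_div, one_mul, div_le_one h2η]
    exact hy₀norm
  · have split : z - c • y₀ = (z - y₀) + (1 - c) • y₀ := by
      rw [sub_smul, one_smul]; abel
    have h1c : 0 ≤ 1 - c := by linarith
    have hsnd : ‖(1 - c) • y₀‖ ≤ 2 * η := by
      rw [norm_smul, Real.norm_eq_abs, abs_of_nonneg h1c]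
      have h1c' : 1 - c = (2 * η) / (1 + 2 * η) := by
        rw [hc]; field_simp; ring
      rw [h1c']
      calc 2 * η / (1 + 2 * η) * ‖y₀‖ ≤ 2 * η / (1 + 2 * η) * (1 + 2 * η) := by
            apply mul_le_mul_of_nonneg_left hy₀norm (by positivity)
        _ = 2 * η := by field_simp
    have hfst : ‖z - y₀‖ < 2 * η := by
      rw [hy₀]; simpa using hmnorm'
    calc ‖z - c • y₀‖ = ‖(z - y₀) + (1 - c) • y₀‖ := by rw [split]
      _ ≤ ‖z - y₀‖ + ‖(1 - c) • y₀‖ := norm_add_le _ _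
      _ ≤ 2 * η + 2 * η := by linarith
      _ = ε := by rw [hη]; ring
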